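/- Let G be a connected nonbipartite graph with a perfect matching M. Then the anti-forcing number af(G, M) is strictly less than the cyclomatic number |E(G)| − |V(G)| + 1 of G. -/

import Mathlib

open scoped Classical

variable {V : Type*} [Fintype V] [DecidableEq V]

set_option linter.unusedSectionVars false
set_option maxHeartbeats 1000000

section Helpers

lemma even_invol (p : V → V) : ∀ (s : Finset V),
    (∀ w ∈ s, p w ∈ s) → (∀ w ∈ s, p (p w) = w) → (∀ w ∈ s, p w ≠ w) → Even s.card := by
  intro s
  induction s using Finset.strongInduction with
  | _ s ih =>
    intro h1 h2 h3
    rcases s.eq_empty_or_nonempty with rfl | ⟨w, hw⟩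
    · simp
    · set t := s \ {w, p w} with ht
      have hsub : {w, p w} ⊆ s := by
        intro x hx
        simp only [Finset.mem_insert, Finset.mem_singleton] at hx
        rcases hx with rfl | rfl
        · exact hw
        · exact h1 w hw
      have htss : t ⊂ s := by
        refine Finset.ssubset_iff_of_subset (Finset.sdiff_subset) |>.2 ⟨w, hw, ?_⟩
        simp [ht]
      have hcard : t.card + 2 = s.card := by
        have h2' : ({w, p w} : Finset V).card = 2 := by
          rw [Finset.card_insert_of_notMem (by simp [Ne.symm (h3 w hw)]), Finset.card_singleton]
        rw [ht, Finset.card_sdiff_of_subset hsub, h2']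
        exact Nat.sub_add_cancel (le_trans (by omega) (Finset.card_le_card hsub))
      have het : Even t.card := by
        refine ih t htss ?_ ?_ ?_
        · intro x hx
          have hxs : x ∈ s := (Finset.sdiff_subset) hx
          simp only [ht, Finset.mem_sdiff, Finset.mem_insert, Finset.mem_singleton] at hx ⊢
          refine ⟨h1 x hxs, ?_⟩
          rintro (hpx | hpx)
          · exact hx.2 (Or.inr (by rw [← hpx, h2 x hxs]))
          · have hxw : x = w := by
              have := congrArg p hpx
              rwa [h2 x hxs, h2 w hw] at this
            exact hx.2 (Or.inl hxw)
        · intro x hx; exact h2 x ((Finset.sdiff_subset) hx)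
        · intro x hx; exact h3 x ((Finset.sdiff_subset) hx)
      rw [← hcard]
      exact het.add even_two

lemma exists_partner {M' : Set (Sym2 V)} (hnd : ∀ e ∈ M', ¬ e.IsDiag)
    (hpm : ∀ v : V, ∃! e, e ∈ M' ∧ v ∈ e) :
    ∃ p : V → V, (∀ v, s(v, p v) ∈ M') ∧ (∀ v, p v ≠ v) ∧
      (∀ v e, e ∈ M' → v ∈ e → e = s(v, p v)) ∧ (∀ v, p (p v) = v) := by
  have h := fun v => (hpm v).exists
  choose f hf1 hf2 using h
  have hu : ∀ v e, e ∈ M' → v ∈ e → e = f v := by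
    intro v e he hve
    exact (hpm v).unique ⟨he, hve⟩ ⟨hf1 v, hf2 v⟩
  refine ⟨fun v => Sym2.Mem.other (hf2 v), ?_, ?_, ?_, ?_⟩
  · intro v; rw [Sym2.other_spec (hf2 v)]; exact hf1 v
  · intro v; exact Sym2.other_ne (hnd _ (hf1 v)) (hf2 v)
  · intro v e he hve
    rw [hu v e he hve, Sym2.other_spec (hf2 v)]
  · intro v
    set p : V → V := fun v => Sym2.Mem.other (hf2 v) with hp
    have h1 : s(v, p v) ∈ M' := by rw [hp]; simp only; rw [Sym2.other_spec (hf2 v)]; exact hf1 v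
    have h2 : s(p v, p (p v)) ∈ M' := by
      rw [hp]; simp only; rw [Sym2.other_spec (hf2 (p v))]; exact hf1 (p v)
    have h3 : (s(v, p v) : Sym2 V) = s(p v, p (p v)) := by
      have := hu (p v) _ h1 (Sym2.mem_mk_right _ _)
      rw [this]
      exact (hu (p v) _ h2 (Sym2.mem_mk_left _ _))▸ rfl
    have hne : p v ≠ v := Sym2.other_ne (hnd _ (hf1 v)) (hf2 v)
    rw [Sym2.eq_iff] at h3
    rcases h3 with ⟨h, _⟩ | ⟨h, _⟩
    · exact absurd h.symm hne
    · exact h.symm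

lemma reach_transfer {H : SimpleGraph V} {x y : V}
    (hr : (H.deleteEdges {s(x, y)}).Reachable x y) :
    ∀ {u v : V}, H.Reachable u v → (H.deleteEdges {s(x, y)}).Reachable u v := by
  intro u v huv
  obtain ⟨p⟩ := huv
  induction p with
  | nil => exact SimpleGraph.Reachable.refl _
  | @cons a b c h q ih =>
    refine SimpleGraph.Reachable.trans ?_ ih
    by_cases he : s(a, b) = s(x, y)
    · rw [Sym2.eq_iff] at he
      rcases he with ⟨rfl, rfl⟩ | ⟨rfl, rfl⟩
      · exact hr
      · exact hr.symm
    · exact SimpleGraph.Adj.reachable (by simp [SimpleGraph.deleteEdges_adj, h, he])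

/-- In a non-acyclic graph, given a "matching" `M`, there is a non-`M` edge on a cycle. -/
lemma exists_removable_edge {H : SimpleGraph V} (hnac : ¬ H.IsAcyclic) {M : Set (Sym2 V)}
    (hpm : ∀ v : V, ∃! e, e ∈ M ∧ v ∈ e) :
    ∃ x y : V, H.Adj x y ∧ s(x, y) ∉ M ∧ (H.deleteEdges {s(x, y)}).Reachable x y := by
  rw [SimpleGraph.IsAcyclic] at hnac
  push_neg at hnac
  obtain ⟨v, c, hc⟩ := hnac
  have key : ∃ x y : V, H.Adj x y ∧ s(x, y) ∉ M ∧ s(x, y) ∈ c.edges := by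
    cases c with
    | nil => exact absurd rfl hc.ne_nil
    | @cons _ b _ h q =>
      cases q with
      | nil => exact absurd hc.three_le_length (by simp)
      | @cons _ u _ h' q' =>
        by_cases hm : s(v, b) ∈ M
        · refine ⟨b, u, h', ?_, by simp⟩
          intro hm'
          have hne : (s(v, b) : Sym2 V) ≠ s(b, u) := by
            have hnd := hc.edges_nodup
            simp only [SimpleGraph.Walk.edges_cons, List.nodup_cons, List.mem_cons] at hnd
            exact fun hcontra => hnd.1 (Or.inl hcontra)
          have := (hpm b).unique ⟨hm, Sym2.mem_mk_right _ _⟩ ⟨hm', Sym2.mem_mk_left _ _⟩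
          exact hne this
        · exact ⟨v, b, h, hm, by simp⟩
  obtain ⟨x, y, hadj, hnm, hmem⟩ := key
  refine ⟨x, y, hadj, hnm, ?_⟩
  by_contra hreach
  have hbr : H.IsBridge s(x, y) := by
    rw [SimpleGraph.isBridge_iff]
    exact hreach
  rw [SimpleGraph.isBridge_iff_adj_and_forall_cycle_notMem ((SimpleGraph.mem_edgeSet H).2 hadj)] at hbr
  exact hbr c hc hmem

lemma exists_spanning_tree (G : SimpleGraph V) (hG : G.Connected) {M : Set (Sym2 V)}
    (hME : M ⊆ G.edgeSet) (hpm : ∀ v : V, ∃! e, e ∈ M ∧ v ∈ e) :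
    ∃ K : Finset (Sym2 V), ↑K ⊆ G.edgeSet ∧ M ⊆ ↑K ∧ (SimpleGraph.fromEdgeSet (↑K : Set (Sym2 V))).IsTree := by
  set P : Finset (Sym2 V) → Prop := fun K =>
    ↑K ⊆ G.edgeSet ∧ M ⊆ ↑K ∧ (SimpleGraph.fromEdgeSet (↑K : Set (Sym2 V))).Connected with hP
  have h0 : ∃ K, P K := by
    refine ⟨G.edgeSet.toFinite.toFinset, ?_⟩
    rw [hP]
    simp only [Set.Finite.coe_toFinset]
    exact ⟨le_refl _, hME, by rw [SimpleGraph.fromEdgeSet_edgeSet]; exact hG⟩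
  have hNne : {n | ∃ K, P K ∧ K.card = n}.Nonempty := ⟨h0.choose.card, h0.choose, h0.choose_spec, rfl⟩
  obtain ⟨K, hK, hKcard⟩ := Nat.sInf_mem hNne
  have hac : (SimpleGraph.fromEdgeSet (↑K : Set (Sym2 V))).IsAcyclic := by
    by_contra hnac
    obtain ⟨x, y, hadj, hnm, hreach⟩ := exists_removable_edge hnac hpm
    set K' := K.erase s(x, y) with hK'
    have hgeq : SimpleGraph.fromEdgeSet (↑K' : Set (Sym2 V)) =
        (SimpleGraph.fromEdgeSet (↑K : Set (Sym2 V))).deleteEdges {s(x, y)} := by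
      ext u v
      simp only [hK', SimpleGraph.fromEdgeSet_adj, SimpleGraph.deleteEdges_adj,
        Finset.coe_erase, Set.mem_diff, Set.mem_singleton_iff, Finset.coe_sort_coe,
        Finset.mem_coe, Finset.mem_erase]
      tauto
    have hPK' : P K' := by
      rw [hP]
      refine ⟨Set.Subset.trans (by exact_mod_cast Finset.erase_subset _ _) hK.1, ?_, ?_⟩
      · intro f hf
        have hfK : f ∈ (↑K : Set (Sym2 V)) := hK.2.1 hf
        simp only [hK', Finset.coe_erase, Set.mem_diff, Set.mem_singleton_iff]
        exact ⟨hfK, fun hcontra => hnm (hcontra ▸ hf)⟩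
      · rw [hgeq]
        haveI := hG.nonempty
        exact SimpleGraph.Connected.mk (fun u v => reach_transfer hreach (hK.2.2.preconnected u v))
    have hmem : s(x, y) ∈ K := by
      have := hadj
      rw [SimpleGraph.fromEdgeSet_adj] at this
      exact_mod_cast this.1
    have hlt : K'.card < K.card := by
      rw [hK', Finset.card_erase_of_mem hmem]
      have : 0 < K.card := Finset.card_pos.2 ⟨_, hmem⟩
      omega
    have hle : sInf {n | ∃ K, P K ∧ K.card = n} ≤ K'.card := Nat.sInf_le ⟨K', hPK', rfl⟩
    omega
  exact ⟨K, hK.1, hK.2.1, ⟨hK.2.2, hac⟩⟩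

lemma tree_adj_parity {H : SimpleGraph V} (hT : H.IsTree) (r : V) {x y : V} (h : H.Adj x y)
    {px : H.Walk r x} {py : H.Walk r y} (hpx : px.IsPath) (hpy : py.IsPath) :
    px.length % 2 ≠ py.length % 2 := by
  by_cases hy : y ∈ px.support
  · have h1 : px.takeUntil y hy = py := (hT.existsUnique_path r y).unique (hpx.takeUntil hy) hpy
    have hd : (px.dropUntil y hy).IsPath := hpx.dropUntil hy
    have hsing : (SimpleGraph.Walk.cons h.symm SimpleGraph.Walk.nil : H.Walk y x).IsPath := by
      simp [SimpleGraph.Walk.isPath_def, h.ne']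
    have heq : px.dropUntil y hy = SimpleGraph.Walk.cons h.symm SimpleGraph.Walk.nil :=
      (hT.existsUnique_path y x).unique hd hsing
    have hlen := congrArg SimpleGraph.Walk.length (px.take_spec hy)
    rw [SimpleGraph.Walk.length_append, h1, heq] at hlen
    simp only [SimpleGraph.Walk.length_cons, SimpleGraph.Walk.length_nil] at hlen
    omega
  · have hcp : (px.concat h).IsPath := by
      rw [SimpleGraph.Walk.isPath_def, SimpleGraph.Walk.support_concat]
      exact List.Nodup.append (hpx.support_nodup) (List.nodup_singleton y)
        (by intro a ha hb
            rw [List.mem_singleton] at hb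
            exact hy (hb ▸ ha))
    have h1 : px.concat h = py := (hT.existsUnique_path r y).unique hcp hpy
    have := congrArg SimpleGraph.Walk.length h1
    rw [SimpleGraph.Walk.length_concat] at this
    omega

lemma tree_two_coloring {H : SimpleGraph V} (hT : H.IsTree) :
    ∃ c : V → Bool, ∀ x y : V, H.Adj x y → c x ≠ c y := by
  haveI := hT.isConnected.nonempty
  obtain ⟨r⟩ := (inferInstance : Nonempty V)
  choose p hp _ using hT.existsUnique_path r
  refine ⟨fun v => decide ((p v).length % 2 = 1), ?_⟩
  intro x y h hcontra
  apply tree_adj_parity hT r h (hp x) (hp y)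
  have h2 := decide_eq_decide.1 hcontra
  omega

lemma forest_pm_parity {H : SimpleGraph V} (hac : H.IsAcyclic) {M' : Set (Sym2 V)}
    (hsub : M' ⊆ H.edgeSet) (hpm : ∀ v : V, ∃! e, e ∈ M' ∧ v ∈ e) {x y : V} (hxy : H.Adj x y) :
    (s(x, y) ∈ M' ↔
      Odd (Finset.univ.filter (fun w => (H.deleteEdges {s(x, y)}).Reachable x w)).card) := by
  obtain ⟨p, hp1, hp2, hp3, hp4⟩ := exists_partner
    (fun e he => SimpleGraph.not_isDiag_of_mem_edgeSet H (hsub he)) hpm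
  set e : Sym2 V := s(x, y) with hedef
  set C : Finset V := Finset.univ.filter (fun w => (H.deleteEdges {e}).Reachable x w) with hC
  have hxC : x ∈ C := by
    simp only [hC, Finset.mem_filter, Finset.mem_univ, true_and]
    exact SimpleGraph.Reachable.refl _
  have hyC : y ∉ C := by
    have hbr : H.IsBridge e := (SimpleGraph.isAcyclic_iff_forall_adj_isBridge.1 hac) hxy
    rw [hedef, SimpleGraph.isBridge_iff] at hbr
    simp only [hC, Finset.mem_filter, Finset.mem_univ, true_and]
    exact hbr
  have step : ∀ w ∈ C, s(w, p w) ≠ e → p w ∈ C := by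
    intro w hw hne
    simp only [hC, Finset.mem_filter, Finset.mem_univ, true_and] at hw ⊢
    refine hw.trans (SimpleGraph.Adj.reachable ?_)
    have hadj : H.Adj w (p w) := (SimpleGraph.mem_edgeSet H).1 (hsub (hp1 w))
    simp [SimpleGraph.deleteEdges_adj, hadj, hne]
  by_cases hmem : e ∈ M'
  · have hpx : p x = y := by
      have := hp3 x e hmem (by rw [hedef]; exact Sym2.mem_mk_left _ _)
      rw [hedef, Sym2.eq_iff] at this
      rcases this with ⟨_, h⟩ | ⟨h, _⟩
      · exact h.symm
      · exact absurd h.symm (hp2 x)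
    have heven : Even (C \ {x}).card := by
      refine even_invol p _ ?_ ?_ ?_
      · intro w hw
        rw [Finset.mem_sdiff, Finset.mem_singleton] at hw ⊢
        have hne : s(w, p w) ≠ e := by
          intro hcontra
          rw [hedef, Sym2.eq_iff] at hcontra
          rcases hcontra with ⟨h1, _⟩ | ⟨h1, _⟩
          · exact hw.2 h1
          · rw [h1] at hw; exact hyC hw.1
        refine ⟨step w hw.1 hne, ?_⟩
        intro hcontra
        have hwy : w = y := by rw [← hp4 w, hcontra, hpx]
        rw [hwy] at hw; exact hyC hw.1
      · intro w _; exact hp4 w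
      · intro w _; exact (hp2 w)
    constructor
    · intro _
      have hcard : (C \ {x}).card + 1 = C.card := by
        have h := Finset.card_sdiff_add_card_eq_card (show {x} ⊆ C by simpa using hxC)
        simpa using h
      rw [← hcard]
      exact heven.add_one
    · intro _; exact hmem
  · have heven : Even C.card := by
      refine even_invol p _ ?_ ?_ ?_
      · intro w hw
        refine step w hw ?_
        intro hcontra
        rw [← hcontra] at hmem
        exact hmem (hp1 w)
      · intro w _; exact hp4 w
      · intro w _; exact hp2 w
    constructor
    · intro h; exact absurd h hmem
    · intro hodd
      exact absurd heven (Nat.not_even_iff_odd.2 hodd)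

lemma forest_pm_unique {H : SimpleGraph V} (hac : H.IsAcyclic) {M M' : Set (Sym2 V)}
    (hsubM : M ⊆ H.edgeSet) (hsubM' : M' ⊆ H.edgeSet)
    (hpmM : ∀ v : V, ∃! e, e ∈ M ∧ v ∈ e) (hpmM' : ∀ v : V, ∃! e, e ∈ M' ∧ v ∈ e) :
    M' = M := by
  have key : ∀ (A B : Set (Sym2 V)), A ⊆ H.edgeSet → B ⊆ H.edgeSet →
      (∀ v : V, ∃! e, e ∈ A ∧ v ∈ e) → (∀ v : V, ∃! e, e ∈ B ∧ v ∈ e) → A ⊆ B := by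
    intro A B hA hB hpA hpB e he
    revert he
    induction e using Sym2.ind with
    | _ x y =>
      intro he
      have hxy : H.Adj x y := (SimpleGraph.mem_edgeSet H).1 (hA he)
      exact (forest_pm_parity hac hB hpB hxy).2 ((forest_pm_parity hac hA hpA hxy).1 he)
  exact Set.Subset.antisymm (key M' M hsubM' hsubM hpmM' hpmM) (key M M' hsubM hsubM' hpmM hpmM')

lemma no_e0 {c : V → Bool} {a b : V} (hab : a ≠ b) (hcab : c a = c b)
    {KE : Set (Sym2 V)} (hprop : ∀ x y : V, s(x, y) ∈ KE → c x ≠ c y)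
    {M M' : Set (Sym2 V)} (hMK : M ⊆ KE) (hM'K : M' ⊆ insert s(a, b) KE)
    (hndM : ∀ e ∈ M, ¬ e.IsDiag) (hndM' : ∀ e ∈ M', ¬ e.IsDiag)
    (hpmM : ∀ v : V, ∃! e, e ∈ M ∧ v ∈ e) (hpmM' : ∀ v : V, ∃! e, e ∈ M' ∧ v ∈ e) :
    s(a, b) ∉ M' := by
  intro hmem
  obtain ⟨p, hp1, hp2, hp3, hp4⟩ := exists_partner hndM hpmM
  obtain ⟨q, hq1, hq2, hq3, hq4⟩ := exists_partner hndM' hpmM'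
  have boolfact : ∀ s t u : Bool, s ≠ t → t ≠ u → s = u := by decide
  set A : Finset V := Finset.univ.filter (fun v => c v = c a) with hA
  set B : Finset V := Finset.univ.filter (fun v => c v ≠ c a) with hB
  have hpropM : ∀ v : V, c (p v) ≠ c v := by
    intro v
    have := hprop v (p v) (hMK (hp1 v))
    exact fun hcontra => this hcontra.symm
  have hAB : A.card = B.card := by
    refine Finset.card_bij' (fun v _ => p v) (fun v _ => p v) ?_ ?_ ?_ ?_
    · intro v hv
      simp only [hA, hB, Finset.mem_filter, Finset.mem_univ, true_and] at hv ⊢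
      rw [← hv]
      exact hpropM v
    · intro v hv
      simp only [hA, hB, Finset.mem_filter, Finset.mem_univ, true_and] at hv ⊢
      exact boolfact _ _ _ (hpropM v) hv
    · intro v _; exact hp4 v
    · intro v _; exact hp4 v
  have hqa : q a = b := by
    have := hq3 a _ hmem (Sym2.mem_mk_left _ _)
    rw [Sym2.eq_iff] at this
    rcases this with ⟨_, h⟩ | ⟨h, _⟩
    · exact h.symm
    · exact absurd h.symm (hq2 a)
  have hqb : q b = a := by rw [← hqa, hq4]
  have hedge : ∀ v : V, v ≠ a → v ≠ b → (s(v, q v) : Sym2 V) ∈ KE := by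
    intro v hva hvb
    have h1 := hM'K (hq1 v)
    rcases Set.mem_insert_iff.1 h1 with h2 | h2
    · rw [Sym2.eq_iff] at h2
      rcases h2 with ⟨h3, _⟩ | ⟨h3, _⟩
      · exact absurd h3 hva
      · exact absurd h3 hvb
    · exact h2
  have hpropM' : ∀ v : V, v ≠ a → v ≠ b → c (q v) ≠ c v := by
    intro v hva hvb
    have := hprop v (q v) (hedge v hva hvb)
    exact fun hcontra => this hcontra.symm
  have haA : a ∈ A := by simp [hA]
  have hbA : b ∈ A := by simp [hA, hcab.symm]
  have hAB' : (A \ {a, b}).card = B.card := by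
    refine Finset.card_bij' (fun v _ => q v) (fun v _ => q v) ?_ ?_ ?_ ?_
    · intro v hv
      simp only [hA, hB, Finset.mem_sdiff, Finset.mem_insert, Finset.mem_singleton,
        Finset.mem_filter, Finset.mem_univ, true_and, not_or] at hv ⊢
      rw [← hv.1]
      exact hpropM' v hv.2.1 hv.2.2
    · intro v hv
      simp only [hA, hB, Finset.mem_sdiff, Finset.mem_insert, Finset.mem_singleton,
        Finset.mem_filter, Finset.mem_univ, true_and, not_or] at hv ⊢
      have hva : v ≠ a := fun hcontra => hv (by rw [hcontra])
      have hvb : v ≠ b := fun hcontra => hv (by rw [hcontra, ← hcab])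
      refine ⟨boolfact _ _ _ (hpropM' v hva hvb) hv, ?_, ?_⟩
      · intro hcontra
        exact hvb (by rw [← hq4 v, hcontra, hqa])
      · intro hcontra
        exact hva (by rw [← hq4 v, hcontra, hqb])
    · intro v hv; exact hq4 v
    · intro v hv
      simp only [hB, Finset.mem_filter, Finset.mem_univ, true_and] at hv
      exact hq4 v
  have hsub : ({a, b} : Finset V) ⊆ A := by
    intro v hv
    rcases Finset.mem_insert.1 hv with rfl | hv
    · exact haA
    · rw [Finset.mem_singleton.1 hv]; exact hbA
  have hcard2 : (A \ {a, b}).card + 2 = A.card := by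
    have := Finset.card_sdiff_add_card_eq_card hsub
    rwa [Finset.card_pair hab] at this
  omega

end Helpers

/-- `M` is a perfect matching of `G`: a set of edges of `G` such that every
vertex lies in exactly one edge of `M`. -/
def IsPM (G : SimpleGraph V) (M : Set (Sym2 V)) : Prop :=
  M ⊆ G.edgeSet ∧ ∀ v : V, ∃! e, e ∈ M ∧ v ∈ e

/-- `M` is the unique perfect matching of `G`. -/
def IsUniquePM (G : SimpleGraph V) (M : Set (Sym2 V)) : Prop :=
  IsPM G M ∧ ∀ M', IsPM G M' → M' = M

/-- A closed walk `c` is an `M`-alternating cycle: it is a cycle of even length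
whose edges lie alternately in `M` and outside `M`. -/
def IsAltCycle {G : SimpleGraph V} (M : Set (Sym2 V)) {v : V} (c : G.Walk v v) : Prop :=
  c.IsCycle ∧ Even c.edges.length ∧
    ((∀ i (h : i < c.edges.length), c.edges.get ⟨i, h⟩ ∈ M ↔ Even i) ∨
     (∀ i (h : i < c.edges.length), c.edges.get ⟨i, h⟩ ∈ M ↔ ¬ Even i))

/-- `S` is an anti-forcing set of the perfect matching `M` of `G`:
`S` consists of edges of `G` not in `M` and `M` is the unique perfect matching
of `G - S`. -/
def IsAntiForcingSet (G : SimpleGraph V) (M S : Set (Sym2 V)) : Prop :=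
  S ⊆ G.edgeSet \ M ∧ IsUniquePM (G.deleteEdges S) M

/-- The anti-forcing number of a perfect matching `M` of `G`. -/
noncomputable def af (G : SimpleGraph V) (M : Set (Sym2 V)) : ℕ :=
  sInf {n | ∃ S : Finset (Sym2 V), S.card = n ∧ IsAntiForcingSet G M ↑S}

/-- For a connected nonbipartite graph `G` with a perfect matching
`M`, `af(G, M) < |E(G)| - |V(G)| + 1` (the cyclomatic number). -/
theorem statement4 (G : SimpleGraph V) (hG : G.Connected) (hnb : ¬ G.Colorable 2)
    (M : Set (Sym2 V)) (hM : IsPM G M) :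
    (af G M : ℤ) < (G.edgeSet.ncard : ℤ) - Fintype.card V + 1 := by
  obtain ⟨hME, hpm⟩ := hM
  obtain ⟨K, hKE, hMK, hT⟩ := exists_spanning_tree G hG hME hpm
  set H := SimpleGraph.fromEdgeSet (↑K : Set (Sym2 V)) with hH
  have hHE : H.edgeSet = ↑K := by
    rw [hH, SimpleGraph.edgeSet_fromEdgeSet]
    refine Set.Subset.antisymm Set.diff_subset ?_
    intro e he
    exact ⟨he, fun hd => (SimpleGraph.not_isDiag_of_mem_edgeSet G (hKE he)) hd⟩
  obtain ⟨c, hc⟩ := tree_two_coloring hT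
  have hbad : ¬ ∀ x y : V, G.Adj x y → c x ≠ c y := by
    intro hgood
    exact hnb (by simpa using (SimpleGraph.Coloring.mk c
      (fun {v w} h => hgood v w h)).colorable)
  push_neg at hbad
  obtain ⟨a, b, hab, hcab⟩ := hbad
  have habne : a ≠ b := hab.ne
  have he0K : s(a, b) ∉ K := by
    intro hmem
    have hadj : H.Adj a b := by
      rw [hH, SimpleGraph.fromEdgeSet_adj]
      exact ⟨by exact_mod_cast hmem, habne⟩
    exact hc a b hadj hcab
  set Ef : Finset (Sym2 V) := G.edgeSet.toFinite.toFinset with hEf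
  set S : Finset (Sym2 V) := Ef \ insert s(a, b) K with hS
  have hIns_sub : ↑(insert s(a, b) K) ⊆ G.edgeSet := by
    intro e he
    rcases Finset.mem_insert.1 (by exact_mod_cast he) with rfl | heK
    · exact hab
    · exact hKE heK
  have hDel : (G.deleteEdges ↑S).edgeSet = ↑(insert s(a, b) K) := by
    rw [SimpleGraph.edgeSet_deleteEdges]
    ext e
    simp only [Set.mem_diff, hS, Finset.coe_sdiff, hEf, Set.Finite.coe_toFinset,
      Finset.mem_coe]
    constructor
    · rintro ⟨heE, heS⟩
      by_contra hne
      exact heS ⟨heE, hne⟩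
    · intro he
      exact ⟨hIns_sub (by exact_mod_cast he), fun h => h.2 he⟩
  have hMsubIns : M ⊆ ↑(insert s(a, b) K) := by
    intro e he
    have : e ∈ K := by exact_mod_cast hMK he
    exact_mod_cast Finset.mem_insert_of_mem this
  have hpmdel : IsPM (G.deleteEdges ↑S) M := by
    refine ⟨?_, hpm⟩
    rw [hDel]
    exact hMsubIns
  have hndM : ∀ e ∈ M, ¬ e.IsDiag :=
    fun e he => SimpleGraph.not_isDiag_of_mem_edgeSet G (hME he)
  have hSanti : IsAntiForcingSet G M ↑S := by
    refine ⟨?_, hpmdel, ?_⟩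
    · intro e he
      simp only [hS, Finset.coe_sdiff, hEf, Set.Finite.coe_toFinset, Set.mem_diff,
        Finset.mem_coe] at he
      exact ⟨he.1, fun hcontra => he.2 (by exact_mod_cast hMsubIns hcontra)⟩
    · intro M' hM'
      have hM'sub : M' ⊆ ↑(insert s(a, b) K) := hDel ▸ hM'.1
      have hM'E : M' ⊆ G.edgeSet := fun e he => hIns_sub (hM'sub he)
      have hndM' : ∀ e ∈ M', ¬ e.IsDiag :=
        fun e he => SimpleGraph.not_isDiag_of_mem_edgeSet G (hM'E he)
      have hM'sub' : M' ⊆ insert s(a, b) (↑K : Set (Sym2 V)) := by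
        intro e he
        have := hM'sub he
        rwa [Finset.coe_insert] at this
      have hprop : ∀ x y : V, s(x, y) ∈ (↑K : Set (Sym2 V)) → c x ≠ c y := by
        intro x y hmem hcontra
        have hxyne : x ≠ y :=
          fun h => (SimpleGraph.not_isDiag_of_mem_edgeSet G (hKE hmem)) (h ▸ Sym2.mk_isDiag_iff.2 rfl)
        exact hc x y (by rw [hH, SimpleGraph.fromEdgeSet_adj]; exact ⟨hmem, hxyne⟩) hcontra
      have he0M' : s(a, b) ∉ M' :=
        no_e0 habne hcab hprop hMK hM'sub' hndM hndM' hpm hM'.2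
      have hM'K : M' ⊆ H.edgeSet := by
        rw [hHE]
        intro e he
        rcases Set.mem_insert_iff.1 (hM'sub' he) with rfl | h
        · exact absurd he he0M'
        · exact h
      have hMH : M ⊆ H.edgeSet := by rw [hHE]; exact hMK
      exact forest_pm_unique hT.IsAcyclic hMH hM'K hpm hM'.2
  have hKcard : K.card + 1 = Fintype.card V := by
    have h1 := hT.card_edgeFinset
    have h2 : H.edgeFinset = K := by
      ext e
      simp [SimpleGraph.mem_edgeFinset, hHE]
    rwa [h2] at h1
  have hsub2 : insert s(a, b) K ⊆ Ef := by
    intro e he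
    rw [hEf, Set.Finite.mem_toFinset]
    exact hIns_sub (by exact_mod_cast he)
  have hScard : S.card + Fintype.card V = Ef.card := by
    have h1 := Finset.card_sdiff_add_card_eq_card hsub2
    rw [← hS, Finset.card_insert_of_notMem he0K] at h1
    omega
  have hafle : af G M ≤ S.card := Nat.sInf_le ⟨S, rfl, hSanti⟩
  have hEcard : G.edgeSet.ncard = Ef.card := by
    rw [hEf, Set.ncard_eq_toFinset_card _ G.edgeSet.toFinite]
  omega
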